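/- Let S be a finite family of entrywise nonnegative matrices in ℝ^{n×n} and μ : S → [0,1] with ∑_{A∈S} μ(A) = 1 and μ(A) > 0 for each A ∈ S. Then the limit lim_{k→∞} (∑_{w ∈ S^k} (∏_{m=1}^k μ(w_m)) ‖A_{w_k} ⋯ A_{w_1}‖)^{1/k} exists and equals ρ(E_μ[S]), the spectral radius of the expectation matrix E_μ[S] = ∑_{A∈S} μ(A) A, where ‖·‖ is the ℓ∞ operator norm (maximum absolute row sum). -/

import Mathlib

open Matrix BigOperators

/-- The spectral radius of a real square matrix: the maximum modulus of its
complex eigenvalues. -/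
noncomputable def specRad {m : Type*} [Fintype m] [DecidableEq m]
    (A : Matrix m m ℝ) : ℝ :=
  (spectralRadius ℂ (A.map (algebraMap ℝ ℂ))).toReal

/-- Ordered matrix product `A (w (k-1)) * ⋯ * A (w 0)` along a word `w`
(i.e. `A_{w_k} ⋯ A_{w_1}` with 1-based indexing). -/
def wordProd {n k : ℕ} {ι : Type*} (A : ι → Matrix (Fin n) (Fin n) ℝ)
    (w : Fin k → ι) : Matrix (Fin n) (Fin n) ℝ :=
  ((List.ofFn fun m => A (w m)).reverse).prod

/-- The ℓ∞ operator norm of a real matrix: the maximum absolute row sum. -/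
noncomputable def rowSumNorm {n : ℕ} (B : Matrix (Fin n) (Fin n) ℝ) : ℝ :=
  ⨆ i, ∑ j, |B i j|

section Aux

open Filter

lemma wordProd_cons {n k : ℕ} {ι : Type*} (A : ι → Matrix (Fin n) (Fin n) ℝ)
    (f : ι) (w : Fin k → ι) :
    wordProd A (Fin.cons f w) = wordProd A w * A f := by
  simp [wordProd, List.ofFn_succ, Fin.cons_succ]

lemma exp_pow {n : ℕ} {ι : Type*} [Fintype ι] (A : ι → Matrix (Fin n) (Fin n) ℝ)
    (μ : ι → ℝ) : ∀ k : ℕ,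
    ∑ w : Fin k → ι, (∏ m, μ (w m)) • wordProd A w = (∑ f, μ f • A f) ^ k := by
  intro k
  induction k with
  | zero => simp [wordProd]
  | succ k ih =>
    rw [← (Fin.consEquiv fun _ : Fin (k+1) => ι).sum_comp
      (fun w => (∏ m, μ (w m)) • wordProd A w)]
    rw [Fintype.sum_prod_type, pow_succ, ← ih, Finset.sum_mul_sum, Finset.sum_comm]
    refine Finset.sum_congr rfl fun f _ => Finset.sum_congr rfl fun w _ => ?_
    have h : ((Fin.consEquiv fun _ : Fin (k+1) => ι) (w, f)) = Fin.cons w f := rfl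
    rw [h, wordProd_cons, Fin.prod_univ_succ, smul_mul_smul_comm]
    simp [Fin.cons_succ, mul_comm]

lemma list_prod_nonneg {n : ℕ} : ∀ (l : List (Matrix (Fin n) (Fin n) ℝ)),
    (∀ B ∈ l, ∀ i j, 0 ≤ B i j) → ∀ i j, 0 ≤ l.prod i j := by
  intro l
  induction l with
  | nil => intro _ i j; simp [Matrix.one_apply]; positivity
  | cons B l ih =>
    intro h i j
    rw [List.prod_cons, Matrix.mul_apply]
    refine Finset.sum_nonneg fun x _ => mul_nonneg (h B (by simp) i x)
      (ih (fun C hC => h C (by simp [hC])) x j)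

lemma wordProd_nonneg {n k : ℕ} {ι : Type*} (A : ι → Matrix (Fin n) (Fin n) ℝ)
    (hA : ∀ f i j, 0 ≤ A f i j) (w : Fin k → ι) : ∀ i j, 0 ≤ wordProd A w i j := by
  refine list_prod_nonneg _ fun B hB => ?_
  rw [List.mem_reverse, List.mem_ofFn] at hB
  obtain ⟨m, rfl⟩ := hB
  exact hA _

lemma pow_nonneg_mat {n : ℕ} (M : Matrix (Fin n) (Fin n) ℝ)
    (hM : ∀ i j, 0 ≤ M i j) (k : ℕ) : ∀ i j, 0 ≤ (M ^ k) i j := by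
  induction k with
  | zero => intro i j; simp [Matrix.one_apply]; positivity
  | succ k ih =>
    intro i j
    rw [pow_succ, Matrix.mul_apply]
    exact Finset.sum_nonneg fun x _ => mul_nonneg (ih i x) (hM x j)

lemma tendsto_rpow_one_div_nat {c : ℝ} (hc : 0 < c) :
    Tendsto (fun k : ℕ => c ^ ((1:ℝ)/k)) atTop (nhds 1) := by
  have h1 : Tendsto (fun k : ℕ => Real.log c * ((1:ℝ)/k)) atTop (nhds 0) := by
    simpa using (tendsto_one_div_atTop_nhds_zero_nat).const_mul (Real.log c)
  have h2 := (Real.continuous_exp.tendsto 0).comp h1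
  simp only [Real.exp_zero] at h2
  refine h2.congr fun k => ?_
  rw [Function.comp_apply, ← Real.rpow_def_of_pos hc]

lemma rowSumNorm_nonneg {n : ℕ} (B : Matrix (Fin n) (Fin n) ℝ) : 0 ≤ rowSumNorm B :=
  Real.iSup_nonneg fun _ => Finset.sum_nonneg fun _ _ => abs_nonneg _

lemma rowSumNorm_le_total {n : ℕ} (hn : 0 < n) (B : Matrix (Fin n) (Fin n) ℝ) :
    rowSumNorm B ≤ ∑ i, ∑ j, |B i j| := by
  have : Nonempty (Fin n) := Fin.pos_iff_nonempty.mp hn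
  exact ciSup_le fun i => Finset.single_le_sum (f := fun i => ∑ j, |B i j|)
    (fun i _ => Finset.sum_nonneg fun j _ => abs_nonneg _) (Finset.mem_univ i)

lemma total_le_rowSumNorm {n : ℕ} (B : Matrix (Fin n) (Fin n) ℝ) :
    ∑ i, ∑ j, |B i j| ≤ n * rowSumNorm B := by
  calc ∑ i, ∑ j, |B i j| ≤ ∑ _i : Fin n, rowSumNorm B := by
        refine Finset.sum_le_sum fun i _ => ?_
        exact le_ciSup (f := fun i => ∑ j, |B i j|)
          (Set.Finite.bddAbove (Set.finite_range _)) i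
    _ = n * rowSumNorm B := by simp [mul_comm]

attribute [local instance] Matrix.linftyOpNormedRing Matrix.linftyOpNormedAlgebra

lemma rowSumNorm_eq_norm {n : ℕ} (hn : 0 < n) (B : Matrix (Fin n) (Fin n) ℝ) :
    rowSumNorm B = ‖B.map (algebraMap ℝ ℂ)‖ := by
  have : Nonempty (Fin n) := Fin.pos_iff_nonempty.mp hn
  rw [Matrix.linfty_opNorm_def]
  rw [rowSumNorm, ← Finset.sup'_univ_eq_ciSup, ← Finset.sup'_eq_sup Finset.univ_nonempty]
  rw [Finset.comp_sup'_eq_sup'_comp (γ := ℝ) Finset.univ_nonempty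
    (NNReal.toReal) (fun x y => by exact NNReal.coe_max x y)]
  refine Finset.sup'_congr _ rfl fun i _ => ?_
  simp only [Function.comp_apply, NNReal.coe_sum, coe_nnnorm]
  refine Finset.sum_congr rfl fun j _ => ?_
  simp [Matrix.map_apply, Real.norm_eq_abs]

lemma gelfand_real {n : ℕ} (hn : 0 < n) (M : Matrix (Fin n) (Fin n) ℝ) :
    Tendsto (fun k : ℕ => rowSumNorm (M ^ k) ^ ((1:ℝ)/k)) atTop (nhds (specRad M)) := by
  have : Nonempty (Fin n) := Fin.pos_iff_nonempty.mp hn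
  set a : Matrix (Fin n) (Fin n) ℂ := M.map (algebraMap ℝ ℂ) with ha
  have hmap : ∀ k : ℕ, (M ^ k).map (algebraMap ℝ ℂ) = a ^ k := by
    intro k
    have : a = (algebraMap ℝ ℂ).mapMatrix M := rfl
    rw [this, ← map_pow]; rfl
  have hfin : spectralRadius ℂ a ≠ ⊤ :=
    (lt_of_le_of_lt (spectrum.spectralRadius_le_nnnorm (𝕜 := ℂ) a)
      (ENNReal.coe_lt_top)).ne
  have hG := spectrum.pow_norm_pow_one_div_tendsto_nhds_spectralRadius a
  have hG2 := (ENNReal.tendsto_toReal hfin).comp hG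
  have heq : (fun k : ℕ => (ENNReal.ofReal (‖a ^ k‖ ^ ((1:ℝ)/k))).toReal)
      = fun k : ℕ => rowSumNorm (M ^ k) ^ ((1:ℝ)/k) := by
    funext k
    rw [ENNReal.toReal_ofReal (Real.rpow_nonneg (norm_nonneg _) _)]
    rw [rowSumNorm_eq_norm hn, hmap]
  rw [specRad, ← ha]
  exact heq ▸ hG2

end Aux

theorem stmt9 {n : ℕ} {ι : Type*} [Fintype ι]
    (A : ι → Matrix (Fin n) (Fin n) ℝ) (hA : ∀ f i j, 0 ≤ A f i j)
    (μ : ι → ℝ) (hμpos : ∀ f, 0 < μ f) (hμ1 : ∑ f, μ f = 1) :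
    Filter.Tendsto
      (fun k : ℕ =>
        (∑ w : Fin k → ι, (∏ m, μ (w m)) * rowSumNorm (wordProd A w)) ^ ((1 : ℝ) / k))
      Filter.atTop (nhds (specRad (∑ f, μ f • A f))) := by
  rcases Nat.eq_zero_or_pos n with hn | hn
  · -- degenerate case n = 0
    subst hn
    have h0 : specRad (∑ f, μ f • A f) = 0 := by
      rw [specRad, spectralRadius, spectrum.of_subsingleton]
      simp
    rw [h0]
    have hrs : ∀ (B : Matrix (Fin 0) (Fin 0) ℝ), rowSumNorm B = 0 := fun B =>
      Real.iSup_of_isEmpty _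
    have hev : ∀ᶠ k : ℕ in Filter.atTop,
        (∑ w : Fin k → ι, (∏ m, μ (w m)) * rowSumNorm (wordProd A w)) ^ ((1:ℝ)/k)
          = 0 := by
      filter_upwards [Filter.eventually_ge_atTop 1] with k hk
      have : (∑ w : Fin k → ι, (∏ m, μ (w m)) * rowSumNorm (wordProd A w)) = 0 := by
        simp [hrs]
      rw [this, Real.zero_rpow (by positivity)]
    exact Filter.Tendsto.congr' (hev.mono fun k h => h.symm) tendsto_const_nhds
  · -- main case n > 0
    set M := ∑ f, μ f • A f with hM
    have hp : ∀ {k : ℕ} (w : Fin k → ι), 0 ≤ ∏ m, μ (w m) := fun w =>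
      Finset.prod_nonneg fun m _ => (hμpos _).le
    have hMnn : ∀ i j, 0 ≤ M i j := by
      intro i j
      rw [hM]
      simp only [Matrix.sum_apply, Matrix.smul_apply, smul_eq_mul]
      exact Finset.sum_nonneg fun f _ => mul_nonneg (hμpos f).le (hA f i j)
    -- total sum identity
    have hT : ∀ k : ℕ,
        ∑ w : Fin k → ι, (∏ m, μ (w m)) * (∑ i, ∑ j, |wordProd A w i j|)
          = ∑ i, ∑ j, |(M ^ k) i j| := by
      intro k
      have h1 := congrArg (fun B : Matrix (Fin n) (Fin n) ℝ => ∑ i, ∑ j, B i j)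
        (exp_pow A μ k)
      simp only [Matrix.sum_apply, Matrix.smul_apply, smul_eq_mul] at h1
      calc ∑ w : Fin k → ι, (∏ m, μ (w m)) * (∑ i, ∑ j, |wordProd A w i j|)
          = ∑ w : Fin k → ι, ∑ i, ∑ j, (∏ m, μ (w m)) * wordProd A w i j := by
            refine Finset.sum_congr rfl fun w _ => ?_
            rw [Finset.mul_sum]
            refine Finset.sum_congr rfl fun i _ => ?_
            rw [Finset.mul_sum]
            refine Finset.sum_congr rfl fun j _ => ?_
            rw [abs_of_nonneg (wordProd_nonneg A hA w i j)]
        _ = ∑ i, ∑ j, ∑ w : Fin k → ι, (∏ m, μ (w m)) * wordProd A w i j := by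
            rw [Finset.sum_comm]
            exact Finset.sum_congr rfl fun i _ => Finset.sum_comm
        _ = ∑ i, ∑ j, (M ^ k) i j := h1
        _ = ∑ i, ∑ j, |(M ^ k) i j| := by
            refine Finset.sum_congr rfl fun i _ => Finset.sum_congr rfl fun j _ => ?_
            rw [abs_of_nonneg (pow_nonneg_mat M hMnn k i j)]
    -- sandwich bounds
    set E : ℕ → ℝ := fun k =>
      ∑ w : Fin k → ι, (∏ m, μ (w m)) * rowSumNorm (wordProd A w) with hE
    have hupper : ∀ k : ℕ, E k ≤ n * rowSumNorm (M ^ k) := by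
      intro k
      calc E k ≤ ∑ w : Fin k → ι, (∏ m, μ (w m)) * (∑ i, ∑ j, |wordProd A w i j|) :=
            Finset.sum_le_sum fun w _ =>
              mul_le_mul_of_nonneg_left (rowSumNorm_le_total hn _) (hp w)
        _ = ∑ i, ∑ j, |(M ^ k) i j| := hT k
        _ ≤ n * rowSumNorm (M ^ k) := total_le_rowSumNorm _
    have hlower : ∀ k : ℕ, (n:ℝ)⁻¹ * rowSumNorm (M ^ k) ≤ E k := by
      intro k
      have h1 : ∑ i, ∑ j, |(M ^ k) i j| ≤ n * E k := by
        rw [← hT k, Finset.mul_sum]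
        refine Finset.sum_le_sum fun w _ => ?_
        rw [mul_left_comm]
        exact mul_le_mul_of_nonneg_left (total_le_rowSumNorm _) (hp w)
      have h2 : rowSumNorm (M ^ k) ≤ n * E k :=
        le_trans (rowSumNorm_le_total hn _) h1
      have hn' : (0:ℝ) < n := by exact_mod_cast hn
      rw [inv_mul_le_iff₀ hn']
      linarith [h2]
    have hEnn : ∀ k, 0 ≤ E k := fun k =>
      Finset.sum_nonneg fun w _ => mul_nonneg (hp w) (rowSumNorm_nonneg _)
    have hRnn : ∀ k, 0 ≤ rowSumNorm (M ^ k) := fun k => rowSumNorm_nonneg _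
    have hn' : (0:ℝ) < n := by exact_mod_cast hn
    -- limits of bounding sequences
    have hG := gelfand_real hn M
    have hlow : Filter.Tendsto
        (fun k : ℕ => ((n:ℝ)⁻¹ * rowSumNorm (M ^ k)) ^ ((1:ℝ)/k))
        Filter.atTop (nhds (specRad M)) := by
      have := (tendsto_rpow_one_div_nat (inv_pos.mpr hn')).mul hG
      rw [one_mul] at this
      refine this.congr fun k => ?_
      rw [← Real.mul_rpow (by positivity) (hRnn k)]
    have hhigh : Filter.Tendsto
        (fun k : ℕ => ((n:ℝ) * rowSumNorm (M ^ k)) ^ ((1:ℝ)/k))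
        Filter.atTop (nhds (specRad M)) := by
      have := (tendsto_rpow_one_div_nat hn').mul hG
      rw [one_mul] at this
      refine this.congr fun k => ?_
      rw [← Real.mul_rpow hn'.le (hRnn k)]
    refine tendsto_of_tendsto_of_tendsto_of_le_of_le hlow hhigh ?_ ?_
    · intro k
      exact Real.rpow_le_rpow (mul_nonneg (by positivity) (hRnn k)) (hlower k) (by positivity)
    · intro k
      exact Real.rpow_le_rpow (hEnn k) (hupper k) (by positivity)
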